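/- Let p be an odd prime and a ∈ ℤ_p with residue ⟨a⟩. Then ∑_{k=0}^{p−1} C(2k,k)·C(a,k)·C(−1−a,k)·x^k ≡ ∑_{k=0}^{p−1} C(2k,k)·C(⟨a⟩,k)·C(⟨a⟩+k,k)·(−x)^k (mod p) for all x ∈ ℤ_p. -/
import Mathlib

/-- Generalized binomial coefficient C(a,k) = a(a-1)...(a-k+1)/k!. -/
def gchoose (a : ℚ) (k : ℕ) : ℚ :=
  (∏ i ∈ Finset.range k, (a - i)) / (Nat.factorial k : ℚ)

/-- `x` is a `p`-adic integer: its reduced denominator is not divisible by `p`. -/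
def IsPInt (p : ℕ) (x : ℚ) : Prop := ¬ p ∣ x.den

/-- `x ≡ y (mod p^e)` for rationals: `(x - y)/p^e` is a `p`-adic integer. -/
def ModCong (p e : ℕ) (x y : ℚ) : Prop :=
  ∃ z : ℚ, ¬ p ∣ z.den ∧ x - y = (p : ℚ) ^ e * z

/-- The Legendre polynomial `P_n(x) = ∑_{k=0}^n C(n,k) C(n+k,k) ((x-1)/2)^k`. -/
noncomputable def legendre (n : ℕ) : Polynomial ℚ :=
  ∑ k ∈ Finset.range (n + 1),
    Polynomial.C ((n.choose k : ℚ) * ((n + k).choose k)) *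
      (Polynomial.C (1/2 : ℚ) * (Polynomial.X - 1)) ^ k

section aux
variable {p : ℕ} [hp : Fact p.Prime]

lemma isPInt_iff (q : ℚ) : IsPInt p q ↔ padicNorm p q ≤ 1 := by
  unfold IsPInt
  constructor
  · intro h
    rcases eq_or_ne q 0 with rfl | hq
    · simp [padicNorm]
    · rw [← Rat.num_div_den q, padicNorm.div, (padicNorm.nat_eq_one_iff (p := p) _).mpr h, div_one]
      exact padicNorm.of_int _
  · intro hn h
    have hq : q ≠ 0 := by
      rintro rfl
      exact hp.out.ne_one (Nat.dvd_one.mp h)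
    have hnum : ¬ (p : ℤ) ∣ q.num := by
      intro hd
      have : p ∣ q.num.natAbs := Int.natCast_dvd.mp hd
      exact hp.out.ne_one (Nat.dvd_one.mp (q.reduced ▸ Nat.dvd_gcd this h))
    have h1 : padicNorm p (q.num : ℚ) = 1 := (padicNorm.int_eq_one_iff _).mpr hnum
    have h2 : padicNorm p (q.den : ℚ) < 1 := (padicNorm.nat_lt_one_iff _).mpr h
    have h3 : (0:ℚ) < padicNorm p (q.den : ℚ) :=
      lt_of_le_of_ne (padicNorm.nonneg _) (Ne.symm (padicNorm.nonzero (by exact_mod_cast q.den_nz)))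
    rw [← Rat.num_div_den q, padicNorm.div, h1] at hn
    have : (1:ℚ) ≤ padicNorm p (q.den : ℚ) := by
      rw [div_le_one h3] at hn; exact hn
    linarith

lemma modCong_iff (x y : ℚ) : ModCong p 1 x y ↔ padicNorm p (x - y) ≤ (p : ℚ)⁻¹ := by
  constructor
  · rintro ⟨z, hz, he⟩
    rw [he, pow_one, padicNorm.mul, padicNorm.padicNorm_p_of_prime]
    have hz1 : padicNorm p z ≤ 1 := (isPInt_iff z).mp hz
    have : (0:ℚ) < (p:ℚ)⁻¹ := by
      rw [inv_pos]; exact_mod_cast hp.out.pos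
    nlinarith [padicNorm.nonneg (p := p) z]
  · intro hn
    have hp0 : (p : ℚ) ≠ 0 := by exact_mod_cast hp.out.ne_zero
    refine ⟨(x - y) / p, (isPInt_iff _).mpr ?_, by field_simp⟩
    rw [padicNorm.div, padicNorm.padicNorm_p_of_prime]
    have hppos : (0:ℚ) < (p:ℚ)⁻¹ := by
      rw [inv_pos]; exact_mod_cast hp.out.pos
    rw [div_le_one hppos]
    exact hn

lemma norm_prod_le_one {ι : Type*} {s : Finset ι} {f : ι → ℚ}
    (h : ∀ i ∈ s, padicNorm p (f i) ≤ 1) : padicNorm p (∏ i ∈ s, f i) ≤ 1 := by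
  classical
  induction s using Finset.cons_induction with
  | empty => simp [padicNorm.one]
  | cons a s ha ih =>
    rw [Finset.prod_cons, padicNorm.mul]
    have h1 := h a (Finset.mem_cons_self a s)
    have h2 := ih fun i hi => h i (Finset.mem_cons_of_mem hi)
    nlinarith [padicNorm.nonneg (p := p) (f a), padicNorm.nonneg (p := p) (∏ i ∈ s, f i)]

lemma norm_sub_mul {ε u v u' v' : ℚ} (h : padicNorm p (u - v) ≤ ε)
    (h' : padicNorm p (u' - v') ≤ ε) (hu' : padicNorm p u' ≤ 1)
    (hv : padicNorm p v ≤ 1) : padicNorm p (u * u' - v * v') ≤ ε := by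
  have he : u * u' - v * v' = (u - v) * u' + v * (u' - v') := by ring
  rw [he]
  refine le_trans padicNorm.nonarchimedean (max_le ?_ ?_) <;> rw [padicNorm.mul]
  · nlinarith [padicNorm.nonneg (p := p) (u - v), padicNorm.nonneg (p := p) u']
  · nlinarith [padicNorm.nonneg (p := p) (u' - v'), padicNorm.nonneg (p := p) v]

lemma norm_prod_sub_prod {ι : Type*} {s : Finset ι} {u v : ι → ℚ} {ε : ℚ}
    (hu : ∀ i ∈ s, padicNorm p (u i) ≤ 1) (hv : ∀ i ∈ s, padicNorm p (v i) ≤ 1)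
    (h : ∀ i ∈ s, padicNorm p (u i - v i) ≤ ε) (hε : 0 ≤ ε) :
    padicNorm p (∏ i ∈ s, u i - ∏ i ∈ s, v i) ≤ ε := by
  classical
  induction s using Finset.cons_induction with
  | empty => simpa [padicNorm.zero] using hε
  | cons a s ha ih =>
    rw [Finset.prod_cons, Finset.prod_cons]
    exact norm_sub_mul (h a (Finset.mem_cons_self a s))
      (ih (fun i hi => hu i (Finset.mem_cons_of_mem hi))
          (fun i hi => hv i (Finset.mem_cons_of_mem hi))
          (fun i hi => h i (Finset.mem_cons_of_mem hi)))
      (norm_prod_le_one fun i hi => hu i (Finset.mem_cons_of_mem hi))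
      (hv a (Finset.mem_cons_self a s))

lemma norm_sub_le_one {q r : ℚ} (hq : padicNorm p q ≤ 1) (hr : padicNorm p r ≤ 1) :
    padicNorm p (q - r) ≤ 1 :=
  le_trans padicNorm.sub (max_le hq hr)

end aux

lemma gchoose_natCast (n k : ℕ) : gchoose (n : ℚ) k = (n.choose k : ℚ) := by
  unfold gchoose
  have key : ∏ i ∈ Finset.range k, ((n : ℚ) - i) = (n.descFactorial k : ℚ) := by
    rcases le_or_gt k n with hkn | hkn
    · rw [Nat.descFactorial_eq_prod_range, Nat.cast_prod]
      refine Finset.prod_congr rfl fun i hi => ?_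
      rw [Finset.mem_range] at hi
      rw [Nat.cast_sub (le_of_lt (lt_of_lt_of_le hi hkn))]
    · rw [Nat.descFactorial_eq_zero_iff_lt.mpr hkn, Nat.cast_zero]
      exact Finset.prod_eq_zero (Finset.mem_range.mpr hkn) (by simp)
  rw [key, Nat.descFactorial_eq_factorial_mul_choose, Nat.cast_mul]
  rw [mul_comm ((k.factorial : ℚ)) _, mul_div_assoc,
    div_self (by exact_mod_cast k.factorial_ne_zero), mul_one]

lemma prod_add_nat (r k : ℕ) :
    ∏ i ∈ Finset.range k, ((r : ℚ) + 1 + i) = ((r + k).descFactorial k : ℚ) := by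
  have hnat : ∏ i ∈ Finset.range k, (r + 1 + i) = (r + k).descFactorial k := by
    rw [Nat.descFactorial_eq_prod_range]
    rw [← Finset.prod_range_reflect (fun i => r + 1 + i) k]
    refine Finset.prod_congr rfl fun i hi => ?_
    rw [Finset.mem_range] at hi
    omega
  rw [← hnat, Nat.cast_prod]
  refine Finset.prod_congr rfl fun i hi => by push_cast; ring

lemma gchoose_neg_natCast (r k : ℕ) :
    gchoose (-1 - (r : ℚ)) k = (-1) ^ k * ((r + k).choose k : ℚ) := by
  unfold gchoose
  have h1 : ∏ i ∈ Finset.range k, ((-1 : ℚ) - r - i)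
      = (-1) ^ k * ∏ i ∈ Finset.range k, ((r : ℚ) + 1 + i) := by
    calc ∏ i ∈ Finset.range k, ((-1 : ℚ) - r - i)
        = ∏ i ∈ Finset.range k, ((-1) * ((r : ℚ) + 1 + i)) :=
          Finset.prod_congr rfl fun i _ => by ring
      _ = (-1) ^ k * ∏ i ∈ Finset.range k, ((r : ℚ) + 1 + i) := by
          rw [Finset.prod_mul_distrib, Finset.prod_const, Finset.card_range]
  rw [h1, prod_add_nat, Nat.descFactorial_eq_factorial_mul_choose, Nat.cast_mul]
  rw [mul_comm ((k.factorial : ℚ)) _, mul_div_assoc, mul_div_assoc,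
    div_self (by exact_mod_cast k.factorial_ne_zero), mul_one]

theorem sum_cong_residue_sum (p : ℕ) (hp : p.Prime) (hodd : Odd p)
    (a x : ℚ) (ha : IsPInt p a) (hx : IsPInt p x)
    (r : ℕ) (hr : r < p) (har : ModCong p 1 a r) :
    ModCong p 1
      (∑ k ∈ Finset.range p,
        ((2 * k).choose k : ℚ) * gchoose a k * gchoose (-1 - a) k * x ^ k)
      (∑ k ∈ Finset.range p,
        ((2 * k).choose k : ℚ) * (r.choose k) * ((r + k).choose k) * (-x) ^ k) := by
  haveI : Fact p.Prime := ⟨hp⟩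
  rw [modCong_iff, ← Finset.sum_sub_distrib]
  have hεpos : (0:ℚ) ≤ (p:ℚ)⁻¹ := by positivity
  refine padicNorm.sum_le' (fun k hk => ?_) hεpos
  rw [Finset.mem_range] at hk
  -- rewrite the k-th term
  have hterm : ((2 * k).choose k : ℚ) * gchoose a k * gchoose (-1 - a) k * x ^ k -
      ((2 * k).choose k : ℚ) * (r.choose k) * ((r + k).choose k) * (-x) ^ k
      = ((2 * k).choose k : ℚ) *
        (gchoose a k * gchoose (-1 - a) k - gchoose (r : ℚ) k * gchoose (-1 - (r:ℚ)) k)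
        * x ^ k := by
    rw [gchoose_natCast, gchoose_neg_natCast, neg_pow x k]
    push_cast
    ring
  rw [hterm]
  -- norms
  have hax : padicNorm p (a - r) ≤ (p:ℚ)⁻¹ := (modCong_iff a r).mp har
  have hna : padicNorm p a ≤ 1 := (isPInt_iff a).mp ha
  have hnx : padicNorm p x ≤ 1 := (isPInt_iff x).mp hx
  have hnr : padicNorm p ((r:ℚ)) ≤ 1 := padicNorm.of_nat r
  have hfac : padicNorm p ((k.factorial : ℚ)) = 1 := by
    refine (padicNorm.nat_eq_one_iff _).mpr ?_
    rw [hp.dvd_factorial]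
    omega
  -- the key difference bound
  have hΔ : padicNorm p
      (gchoose a k * gchoose (-1 - a) k - gchoose (r : ℚ) k * gchoose (-1 - (r:ℚ)) k)
      ≤ (p:ℚ)⁻¹ := by
    have heq : gchoose a k * gchoose (-1 - a) k - gchoose (r : ℚ) k * gchoose (-1 - (r:ℚ)) k
        = ((∏ i ∈ Finset.range k, (a - i)) * (∏ i ∈ Finset.range k, ((-1 : ℚ) - a - i))
          - (∏ i ∈ Finset.range k, ((r:ℚ) - i)) * (∏ i ∈ Finset.range k, ((-1 : ℚ) - (r:ℚ) - i)))
          / ((k.factorial : ℚ) * (k.factorial : ℚ)) := by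
      unfold gchoose
      have : ((-1 : ℚ) - a) = -1 - a := rfl
      field_simp
    rw [heq, padicNorm.div, padicNorm.mul, hfac, mul_one, div_one]
    have hone : ∀ i : ℕ, i ∈ Finset.range k → padicNorm p ((i : ℚ)) ≤ 1 :=
      fun i _ => padicNorm.of_nat i
    refine norm_sub_mul ?_ ?_ ?_ ?_
    · refine norm_prod_sub_prod (u := fun i : ℕ => a - (i:ℚ)) (v := fun i : ℕ => (r:ℚ) - (i:ℚ))
        (fun i hi => norm_sub_le_one hna (hone i hi))
        (fun i hi => norm_sub_le_one hnr (hone i hi))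
        (fun i hi => ?_) hεpos
      have : a - (i:ℚ) - ((r:ℚ) - i) = a - r := by ring
      rw [this]; exact hax
    · refine norm_prod_sub_prod (u := fun i : ℕ => (-1:ℚ) - a - (i:ℚ)) (v := fun i : ℕ => (-1:ℚ) - (r:ℚ) - (i:ℚ))
        (fun i hi => norm_sub_le_one (norm_sub_le_one (by simpa using padicNorm.of_int (-1)) hna) (hone i hi))
        (fun i hi => norm_sub_le_one (norm_sub_le_one (by simpa using padicNorm.of_int (-1)) hnr) (hone i hi))
        (fun i hi => ?_) hεpos
      have : (-1:ℚ) - a - i - ((-1:ℚ) - (r:ℚ) - i) = -(a - r) := by ring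
      rw [this, padicNorm.neg]; exact hax
    · exact norm_prod_le_one fun i hi =>
        norm_sub_le_one (norm_sub_le_one (by simpa using padicNorm.of_int (-1)) hna) (hone i hi)
    · exact norm_prod_le_one fun i hi => norm_sub_le_one hnr (hone i hi)
  -- assemble
  rw [padicNorm.mul, padicNorm.mul]
  have hxk : padicNorm p (x ^ k) ≤ 1 := by
    have : x ^ k = ∏ _i ∈ Finset.range k, x := by rw [Finset.prod_const, Finset.card_range]
    rw [this]
    exact norm_prod_le_one fun i _ => hnx
  have hc : padicNorm p (((2 * k).choose k : ℚ)) ≤ 1 := padicNorm.of_nat _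
  have h0c := padicNorm.nonneg (p := p) (((2 * k).choose k : ℚ))
  have h0Δ := padicNorm.nonneg (p := p)
    (gchoose a k * gchoose (-1 - a) k - gchoose (r : ℚ) k * gchoose (-1 - (r:ℚ)) k)
  have h0x := padicNorm.nonneg (p := p) (x ^ k)
  calc padicNorm p (((2 * k).choose k : ℚ)) *
        padicNorm p (gchoose a k * gchoose (-1 - a) k - gchoose (r : ℚ) k * gchoose (-1 - (r:ℚ)) k) *
        padicNorm p (x ^ k) ≤ 1 * (p:ℚ)⁻¹ * 1 :=
      mul_le_mul (mul_le_mul hc hΔ h0Δ zero_le_one) hxk h0x (by positivity)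
    _ = (p:ℚ)⁻¹ := by ring
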